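/- arXiv:1910.04692 — 2 statements merged into one kernel-verified Lean document; each statement's English description precedes it below -/
import Mathlib

section
/- Let G be a finite group, let α be an involutory automorphism of G, and let N be an α-invariant normal subgroup of G. If g ∈ G is such that the coset Ng has odd order in G/N and the automorphism of G/N induced by α inverts Ng (i.e. (Ng)^α = (Ng)⁻¹), then there exists h ∈ J_G(α) with Nh = Ng. -/
/-- The paper-style commutator `[g,x] = g⁻¹x⁻¹gx`. -/
def commStep {G : Type*} [Group G] (x g : G) : G := g⁻¹ * x⁻¹ * g * x

/-- `E_{G,k}(x) = {[g,x,…,x] : g ∈ G}` (`x` appearing `k` times). -/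
def ESet {G : Type*} [Group G] (x : G) (k : ℕ) : Set G := Set.range ((commStep x)^[k])

/-- The step `g ↦ [g,α] = g⁻¹ · α g` for an automorphism `α`. -/
def autStep {G : Type*} [Group G] (α : G ≃* G) (g : G) : G := g⁻¹ * α g

/-- `E_{G,k}(α) = {[g,α,…,α] : g ∈ G}` (`α` appearing `k` times). -/
def EAutSet {G : Type*} [Group G] (α : G ≃* G) (k : ℕ) : Set G := Set.range ((autStep α)^[k])

/-- `[G,α]`: the subgroup generated by all `g⁻¹ · α g`. -/
def autCommutator {G : Type*} [Group G] (α : G ≃* G) : Subgroup G :=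
  Subgroup.closure (Set.range (autStep α))

/-- `J_G(α)`: the set of odd-order elements of `G` inverted by `α`. -/
def JSet {G : Type*} [Group G] (α : G ≃* G) : Set G :=
  {g | Odd (orderOf g) ∧ α g = g⁻¹}

/-- `C_G(α)`: the fixed-point subgroup of the automorphism `α`. -/
def fixedSubgroup {G : Type*} [Group G] (α : G ≃* G) : Subgroup G where
  carrier := {g | α g = g}
  one_mem' := map_one α
  mul_mem' := by
    intro a b ha hb
    simp only [Set.mem_setOf_eq, map_mul] at *
    rw [ha, hb]
  inv_mem' := by
    intro a ha
    simp only [Set.mem_setOf_eq, map_inv] at *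
    rw [ha]

/-- `H` is a normal subgroup of `K` (both regarded as subgroups of an ambient group). -/
def NormalIn {G : Type*} [Group G] (H K : Subgroup G) : Prop :=
  H ≤ K ∧ ∀ k ∈ K, ∀ h ∈ H, k * h * k⁻¹ ∈ H

/-- `A` is subnormal: there is a chain `A = c 0 ⊴ c 1 ⊴ ⋯ ⊴ c n = ⊤`. -/
def IsSubnormal {G : Type*} [Group G] (A : Subgroup G) : Prop :=
  ∃ (n : ℕ) (c : ℕ → Subgroup G), c 0 = A ∧ c n = ⊤ ∧ ∀ i < n, NormalIn (c i) (c (i + 1))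

/-- `G` satisfies the max condition on subgroups. -/
def MaxCondSubgroups (G : Type*) [Group G] : Prop :=
  ∀ S : Set (Subgroup G), S.Nonempty → ∃ M ∈ S, ∀ H ∈ S, M ≤ H → H = M

/-- `G` satisfies the min condition on subnormal subgroups. -/
def MinCondSubnormal (G : Type*) [Group G] : Prop :=
  ∀ S : Set (Subgroup G), S.Nonempty → (∀ H ∈ S, IsSubnormal H) →
    ∃ M ∈ S, ∀ H ∈ S, H ≤ M → H = M

/-- `⟨A^H⟩`: the subgroup generated by all `H`-conjugates of `A`. -/
def conjClosure {G : Type*} [Group G] (A H : Subgroup G) : Subgroup G :=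
  Subgroup.closure {x | ∃ h ∈ H, ∃ a ∈ A, x = h * a * h⁻¹}

/-- The normal closure descending series of `A` in `H`: `H₀ = H`, `H_{i+1} = ⟨A^{H_i}⟩`. -/
def nccSeries {G : Type*} [Group G] (A H : Subgroup G) : ℕ → Subgroup G
  | 0 => H
  | i + 1 => conjClosure A (nccSeries A H i)

/-- `F(A,H) = ⋂_i H_i`, the stable term of the normal closure descending series. -/
def nccStable {G : Type*} [Group G] (A H : Subgroup G) : Subgroup G :=
  ⨅ i, nccSeries A H i

/-- Lemma 16 of Guralnick–Tracey: if `N` is an `α`-invariant normal subgroup of `G`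
and the coset `Ng` has odd order in `G/N` and is inverted by the automorphism induced
by `α`, then some `h ∈ J_G(α)` satisfies `Nh = Ng`. -/
theorem stmt_16 {G : Type*} [Group G] [Finite G] (α : G ≃* G)
    (hinv : ∀ g : G, α (α g) = g) (N : Subgroup G) [N.Normal]
    (hNinv : ∀ n ∈ N, α n ∈ N) (g : G)
    (hodd : Odd (orderOf (QuotientGroup.mk' N g)))
    (hinverted : QuotientGroup.mk' N (α g) = (QuotientGroup.mk' N g)⁻¹) :
    ∃ h ∈ JSet α, QuotientGroup.mk' N h = QuotientGroup.mk' N g := by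
  set f := QuotientGroup.mk' N with hf
  obtain ⟨c, hc⟩ := hodd
  set k := c + 1 with hk
  set h := g ^ k * (α (g ^ k))⁻¹ with hh
  have hαh : α h = h⁻¹ := by
    simp only [hh, map_mul, map_inv, map_pow, hinv, mul_inv_rev, inv_inv]
  have hfh : f h = f g := by
    have h1 : f (α (g ^ k)) = ((f g)⁻¹) ^ k := by
      rw [map_pow, map_pow, hinverted, inv_pow]
    have h2 : f h = f g ^ k * (((f g)⁻¹) ^ k)⁻¹ := by
      rw [hh, map_mul, map_inv, map_pow, h1]
    rw [h2, inv_pow, inv_inv, ← pow_add]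
    have hkk : k + k = orderOf (f g) + 1 := by omega
    rw [hkk, pow_add, pow_orderOf_eq_one, one_mul, pow_one]
  -- decompose order of h
  set n := orderOf h with hn
  have hn0 : n ≠ 0 := (orderOf_pos h).ne'
  set b := ordCompl[2] n with hb
  have hbnd : ¬ (2 ∣ b) := Nat.not_dvd_ordCompl Nat.prime_two hn0
  have hco : Nat.Coprime (2 ^ n.factorization 2) b :=
    Nat.Coprime.pow_left _ (Nat.coprime_ordCompl Nat.prime_two hn0)
  obtain ⟨j, hj1, hj2⟩ := Nat.chineseRemainder hco 0 1
  have h2j : (2 ^ n.factorization 2 : ℕ) ∣ j := (Nat.modEq_zero_iff_dvd).mp hj1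
  refine ⟨h ^ j, ⟨?_, ?_⟩, ?_⟩
  · -- Odd (orderOf (h ^ j))
    have hdvd : orderOf (h ^ j) ∣ b := by
      apply orderOf_dvd_of_pow_eq_one
      rw [← pow_mul]
      apply orderOf_dvd_iff_pow_eq_one.mp
      rw [← hn, ← Nat.ordProj_mul_ordCompl_eq_self n 2]
      exact Nat.mul_dvd_mul h2j (dvd_refl b)
    have : ¬ (2 ∣ orderOf (h ^ j)) := fun hd => hbnd (hd.trans hdvd)
    exact Nat.odd_iff.mpr (Nat.two_dvd_ne_zero.mp this)
  · rw [map_pow, hαh, inv_pow]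
  · -- f (h^j) = f g
    have hco2 : Nat.Coprime (orderOf (f g)) (2 ^ n.factorization 2) :=
      Nat.Coprime.pow_right _ (Nat.coprime_comm.mp
        ((Nat.prime_two.coprime_iff_not_dvd).mpr (by omega)))
    have hmn : orderOf (f g) ∣ 2 ^ n.factorization 2 * b := by
      rw [hb, Nat.ordProj_mul_ordCompl_eq_self]
      exact hfh ▸ orderOf_map_dvd f h
    have hm : orderOf (f g) ∣ b := hco2.dvd_of_dvd_mul_left hmn
    rw [map_pow, hfh]
    have hjm : j ≡ 1 [MOD orderOf (f g)] := hj2.of_dvd hm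
    calc f g ^ j = f g ^ 1 := pow_eq_pow_iff_modEq.mpr hjm
    _ = f g := pow_one _
end

section
/- Let G be a nontrivial finite group and let α be an involutory automorphism of G with [G,α] = G. Then the abelianization G/[G,G] has odd order, α induces the inversion map on G/[G,G] (i.e. ([G,G]g)^α = ([G,G]g)⁻¹ for all g ∈ G), the order of G/[G,G] is at most |J_G(α)|, and C_G(α) ≤ [G,G]. -/
/-- Lemma 17 of Guralnick–Tracey: for an involutory automorphism `α` of a nontrivial
finite group `G` with `[G,α] = G`: `|G/[G,G]|` is odd, `α` induces inversion on
`G/[G,G]`, `|G/[G,G]| ≤ |J_G(α)|`, and `C_G(α) ≤ [G,G]`. -/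
theorem stmt_17 {G : Type*} [Group G] [Finite G] [Nontrivial G] (α : G ≃* G)
    (hinv : ∀ g : G, α (α g) = g) (hG : autCommutator α = ⊤) :
    Odd (Nat.card (G ⧸ commutator G)) ∧
      (∀ g : G, QuotientGroup.mk' (commutator G) (α g) =
        (QuotientGroup.mk' (commutator G) g)⁻¹) ∧
      Nat.card (G ⧸ commutator G) ≤ (JSet α).ncard ∧
      fixedSubgroup α ≤ commutator G := by
  set N := commutator G with hN
  -- commutativity of the quotient
  have hcomm : ∀ a b : G ⧸ commutator G, a * b = b * a := by
    intro a b
    induction a using QuotientGroup.induction_on with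
    | H x =>
    induction b using QuotientGroup.induction_on with
    | H y =>
    rw [← QuotientGroup.mk_mul, ← QuotientGroup.mk_mul, QuotientGroup.eq]
    have h : (x * y)⁻¹ * (y * x) = open scoped commutatorElement in ⁅y⁻¹, x⁻¹⁆ := by
      rw [commutatorElement_def]; group
    rw [h, commutator_def]
    exact Subgroup.commutator_mem_commutator (Subgroup.mem_top _) (Subgroup.mem_top _)
  letI : CommGroup (G ⧸ commutator G) :=
    { (inferInstance : Group (G ⧸ commutator G)) with mul_comm := hcomm }
  have hle : commutator G ≤ (commutator G).comap α.toMonoidHom :=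
    Subgroup.characteristic_iff_le_comap.mp inferInstance α
  set β : G ⧸ commutator G →* G ⧸ commutator G :=
    QuotientGroup.map (commutator G) (commutator G) α.toMonoidHom hle with hβ
  have hmap : ∀ g : G, β (QuotientGroup.mk g) = QuotientGroup.mk (α g) := by
    intro g; rw [hβ]; exact QuotientGroup.map_mk _ _ _ _ _
  have hββ : ∀ q : G ⧸ commutator G, β (β q) = q := by
    intro q
    induction q using QuotientGroup.induction_on with
    | H x => rw [hmap, hmap, hinv]
  -- the range of q ↦ q⁻¹ * β q is all of Q
  have hA : ∀ q : G ⧸ commutator G, ∃ r : G ⧸ commutator G, r⁻¹ * β r = q := by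
    set R : Subgroup (G ⧸ commutator G) :=
      { carrier := Set.range (fun r : G ⧸ commutator G => r⁻¹ * β r)
        one_mem' := ⟨1, by simp⟩
        mul_mem' := by
          rintro _ _ ⟨r, rfl⟩ ⟨s, rfl⟩
          refine ⟨r * s, ?_⟩
          simp only [map_mul, mul_inv_rev]
          simp [mul_comm, mul_assoc, mul_left_comm]
        inv_mem' := by
          rintro _ ⟨r, rfl⟩
          refine ⟨β r, ?_⟩
          show (β r)⁻¹ * β (β r) = ((fun r => r⁻¹ * β r) r)⁻¹
          rw [hββ, mul_inv_rev, inv_inv] } with hR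
    have h1 : (Subgroup.closure (Set.range (autStep α))).map
        (QuotientGroup.mk' (commutator G)) = ⊤ := by
      rw [show Subgroup.closure (Set.range (autStep α)) = autCommutator α from rfl, hG]
      exact Subgroup.map_top_of_surjective _ (QuotientGroup.mk'_surjective _)
    have h2 : Subgroup.closure ((QuotientGroup.mk' (commutator G)) ''
        (Set.range (autStep α))) = (⊤ : Subgroup (G ⧸ commutator G)) := by
      rw [← MonoidHom.map_closure]; exact h1
    have h3 : (QuotientGroup.mk' (commutator G)) '' (Set.range (autStep α)) ⊆ R := by
      rintro _ ⟨_, ⟨g, rfl⟩, rfl⟩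
      refine ⟨QuotientGroup.mk g, ?_⟩
      show (QuotientGroup.mk g : G ⧸ commutator G)⁻¹ * β (QuotientGroup.mk g) = _
      rw [hmap]
      simp [autStep, QuotientGroup.mk'_apply, QuotientGroup.mk_mul, QuotientGroup.mk_inv]
    have h4 : (⊤ : Subgroup (G ⧸ commutator G)) ≤ R := by
      rw [← h2]; exact (Subgroup.closure_le _).mpr h3
    intro q
    exact h4 (Subgroup.mem_top q)
  -- α induces inversion on the quotient
  have hβinv : ∀ q : G ⧸ commutator G, β q = q⁻¹ := by
    intro q
    obtain ⟨r, rfl⟩ := hA q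
    rw [map_mul, map_inv, hββ, mul_inv_rev, inv_inv]
  -- squaring is surjective on the quotient
  have hsq : Function.Surjective (fun q : G ⧸ commutator G => q * q) := by
    intro q
    obtain ⟨r, hr⟩ := hA q
    refine ⟨r⁻¹, ?_⟩
    show r⁻¹ * r⁻¹ = q
    rw [← hr, hβinv]
  -- odd order of the quotient
  have hodd : Odd (Nat.card (G ⧸ commutator G)) := by
    by_contra h
    haveI : Fintype (G ⧸ commutator G) := Fintype.ofFinite _
    have h2 : 2 ∣ Fintype.card (G ⧸ commutator G) := by
      rw [← Nat.card_eq_fintype_card]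
      exact Nat.dvd_of_mod_eq_zero (Nat.not_odd_iff.mp h)
    haveI : Fact (Nat.Prime 2) := ⟨Nat.prime_two⟩
    obtain ⟨x, hx⟩ := exists_prime_orderOf_dvd_card 2 h2
    have hx2 : x * x = 1 := by
      have := pow_orderOf_eq_one x
      rwa [hx, sq] at this
    have hinj := Finite.injective_iff_surjective.mpr hsq
    have hx1 : x = 1 := hinj (by simpa using hx2)
    rw [hx1, orderOf_one] at hx
    exact absurd hx (by norm_num)
  refine ⟨hodd, ?_, ?_, ?_⟩
  · intro g
    rw [QuotientGroup.mk'_apply, QuotientGroup.mk'_apply, ← hmap, hβinv]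
  · -- counting: surjection from JSet onto the quotient
    have hsurj : ∀ q : G ⧸ commutator G, ∃ b : G, b ∈ JSet α ∧ QuotientGroup.mk b = q := by
      intro q
      obtain ⟨r, hr⟩ := hA q
      induction r using QuotientGroup.induction_on with
      | H x =>
      set a : G := x⁻¹ * α x with ha
      have hmka : QuotientGroup.mk a = q := by
        rw [← hr, hmap]; simp [ha, QuotientGroup.mk_mul, QuotientGroup.mk_inv]
      have hαa : α a = a⁻¹ := by
        rw [ha, map_mul, map_inv, hinv, mul_inv_rev, inv_inv]
      set n := orderOf a with hn
      have hnpos : 0 < n := orderOf_pos a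
      set k := n.factorization 2 with hk
      set m := ordCompl[2] n with hm
      have hco2 : Nat.Coprime 2 m := Nat.coprime_ordCompl Nat.prime_two hnpos.ne'
      have hco : Nat.Coprime (2 ^ k) m := hco2.pow_left _
      obtain ⟨e, he0, he1⟩ := Nat.chineseRemainder hco 0 1
      have h2ke : 2 ^ k ∣ e := (Nat.modEq_zero_iff_dvd).mp he0
      have hnm : 2 ^ k * m = n := Nat.ordProj_mul_ordCompl_eq_self n 2
      have hmodd : Odd m := by
        rw [Nat.odd_iff]
        rcases Nat.mod_two_eq_zero_or_one m with h2m | h2m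
        · exfalso
          have h2m' : 2 ∣ m := Nat.dvd_of_mod_eq_zero h2m
          have := Nat.dvd_gcd (dvd_refl 2) h2m'
          rw [Nat.Coprime.gcd_eq_one hco2] at this
          norm_num at this
        · exact h2m
      refine ⟨a ^ e, ⟨?_, ?_⟩, ?_⟩
      · -- odd order
        have hbm : (a ^ e) ^ m = 1 := by
          obtain ⟨c, rfl⟩ := h2ke
          rw [← pow_mul]
          apply orderOf_dvd_iff_pow_eq_one.mp
          exact ⟨c, by rw [← hnm.trans hn]; ring⟩
        have hdvd : orderOf (a ^ e) ∣ m := orderOf_dvd_iff_pow_eq_one.mpr hbm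
        exact hmodd.of_dvd_nat hdvd
      · rw [map_pow, hαa, inv_pow]
      · -- correct coset
        set t := orderOf (QuotientGroup.mk a : G ⧸ commutator G) with ht
        have htodd : Odd t :=
          hodd.of_dvd_nat (orderOf_dvd_natCard _)
        have htn : t ∣ n := orderOf_map_dvd (QuotientGroup.mk' (commutator G)) a
        have hct : Nat.Coprime t (2 ^ k) := by
          apply Nat.Coprime.pow_right
          exact ((Nat.prime_two.coprime_iff_not_dvd).mpr
            (Nat.two_dvd_ne_zero.mpr (Nat.odd_iff.mp htodd))).symm
        have htm : t ∣ m := hct.dvd_of_dvd_mul_left (by rwa [hnm])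
        have hmod : e ≡ 1 [MOD t] := he1.of_dvd htm
        calc QuotientGroup.mk (a ^ e) = (QuotientGroup.mk a : G ⧸ commutator G) ^ e :=
              map_pow (QuotientGroup.mk' (commutator G)) a e
          _ = (QuotientGroup.mk a : G ⧸ commutator G) ^ 1 := pow_eq_pow_iff_modEq.mpr hmod
          _ = q := by rw [pow_one, hmka]
    have hfin : (JSet α).Finite := Set.toFinite _
    have : Function.Surjective (fun j : (JSet α) => (QuotientGroup.mk j.1 : G ⧸ commutator G)) := by
      intro q
      obtain ⟨b, hb, hbq⟩ := hsurj q
      exact ⟨⟨b, hb⟩, hbq⟩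
    calc Nat.card (G ⧸ commutator G) ≤ Nat.card (JSet α) :=
          Nat.card_le_card_of_surjective _ this
      _ = (JSet α).ncard := (Nat.card_coe_set_eq _)
  · -- fixed points in the commutator subgroup
    intro g hg
    have hfix : α g = g := hg
    have h1 : (QuotientGroup.mk g : G ⧸ commutator G)⁻¹ = QuotientGroup.mk g := by
      rw [← hβinv, hmap, hfix]
    have h2 : (QuotientGroup.mk g : G ⧸ commutator G) ^ 2 = 1 := by
      rw [sq]; nth_rewrite 2 [← h1]; exact mul_inv_cancel _
    have hd2 : orderOf (QuotientGroup.mk g : G ⧸ commutator G) ∣ 2 :=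
      orderOf_dvd_of_pow_eq_one h2
    have hdodd : Odd (orderOf (QuotientGroup.mk g : G ⧸ commutator G)) :=
      hodd.of_dvd_nat (orderOf_dvd_natCard _)
    have h3 : orderOf (QuotientGroup.mk g : G ⧸ commutator G) = 1 := by
      rcases (Nat.dvd_prime Nat.prime_two).mp hd2 with h | h
      · exact h
      · rw [h] at hdodd; exact absurd hdodd (by decide)
    have h4 : (QuotientGroup.mk g : G ⧸ commutator G) = 1 := orderOf_eq_one_iff.mp h3
    exact (QuotientGroup.eq_one_iff g).mp h4
end
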